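/- Let n ≥ 1 and let F be a field with char(F) ≠ 2 and |F| ≥ n² + 1. If a, b ∈ Σ_n satisfy det(a + x) = det(b + x) for all x ∈ Σ_n, then a = b. -/

import Mathlib

open Matrix

/-- The `F`-submodule of symmetric `n × n` matrices over `F` (the space `Σ_n`). -/
def symmSubmodule (F : Type*) [Field F] (n : ℕ) :
    Submodule F (Matrix (Fin n) (Fin n) F) where
  carrier := {a | aᵀ = a}
  add_mem' := by
    intro a b ha hb
    simp only [Set.mem_setOf_eq] at *
    rw [Matrix.transpose_add, ha, hb]
  zero_mem' := Matrix.transpose_zero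
  smul_mem' := by
    intro c a ha
    simp only [Set.mem_setOf_eq] at *
    rw [Matrix.transpose_smul, ha]

-- Key lemma: symmetric c with det(c+y)=det y for all symmetric y is zero
theorem symm_det_key {F : Type*} [Field F] {n : ℕ} (h2 : Invertible (2 : F))
    (c : Matrix (Fin n) (Fin n) F) (hc : cᵀ = c)
    (H : ∀ y : Matrix (Fin n) (Fin n) F, yᵀ = y → (c + y).det = y.det) :
    c = 0 := by
  classical
  set B : (Fin n → F) →ₗ[F] (Fin n → F) →ₗ[F] F := Matrix.toLinearMap₂' F c with hB
  have hBsymm : B.IsSymm := by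
    refine ⟨fun x y => ?_⟩
    simp only [hB, RingHom.id_apply, Matrix.toLinearMap₂'_apply, smul_eq_mul]
    rw [Finset.sum_comm]
    refine Finset.sum_congr rfl fun i _ => Finset.sum_congr rfl fun j _ => ?_
    have : c j i = c i j := congrFun (congrFun hc i) j
    rw [this]; ring
  obtain ⟨v, hv⟩ := LinearMap.BilinForm.exists_orthogonal_basis hBsymm
  have hfr : Module.finrank F (Fin n → F) = n := Module.finrank_fin_fun F
  let w : Module.Basis (Fin n) F (Fin n → F) := v.reindex (finCongr hfr)
  have hw : ∀ i j : Fin n, i ≠ j → B (w i) (w j) = 0 := by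
    intro i j hij
    simp only [w, Module.Basis.reindex_apply]
    exact hv (fun hh => hij (by simpa using congrArg (finCongr hfr) hh))
  set P : Matrix (Fin n) (Fin n) F := (Pi.basisFun F (Fin n)).toMatrix w with hPdef
  haveI hPinv : Invertible P := (Pi.basisFun F (Fin n)).invertibleToMatrix w
  have hPapp : ∀ i j, P i j = w j i := by
    intro i j
    simp [hPdef, Module.Basis.toMatrix_apply]
  set D : Matrix (Fin n) (Fin n) F := Pᵀ * c * P with hDdef
  have hDij : ∀ i j, D i j = B (w i) (w j) := by
    intro i j
    simp only [hDdef, hB, Matrix.toLinearMap₂'_apply, Matrix.mul_apply, smul_eq_mul,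
      Matrix.transpose_apply, hPapp, Finset.sum_mul, Finset.mul_sum]
    rw [Finset.sum_comm]
    refine Finset.sum_congr rfl fun k _ => Finset.sum_congr rfl fun l _ => by ring
  have hDdiag : D = Matrix.diagonal (fun i => D i i) := by
    ext i j
    by_cases hij : i = j
    · subst hij; simp
    · rw [Matrix.diagonal_apply_ne _ hij, hDij, hw i j hij]
  have hdetP : P.det ≠ 0 := by
    have := Matrix.isUnit_iff_isUnit_det P |>.mp (isUnit_of_invertible P)
    exact this.ne_zero
  set Q : Matrix (Fin n) (Fin n) F := P⁻¹ with hQdef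
  have hPQ : P * Q = 1 := Matrix.mul_nonsing_inv P (isUnit_iff_ne_zero.mpr hdetP)
  have hcQ : Qᵀ * D * Q = c := by
    rw [hDdef]
    calc Qᵀ * (Pᵀ * c * P) * Q = Qᵀ * Pᵀ * c * (P * Q) := by
          simp only [Matrix.mul_assoc]
        _ = (P * Q)ᵀ * c * (P * Q) := by rw [Matrix.transpose_mul]
        _ = c := by rw [hPQ]; simp
  have H' : ∀ z : Matrix (Fin n) (Fin n) F, zᵀ = z → (D + z).det = z.det := by
    intro z hz
    have hy : (Qᵀ * z * Q)ᵀ = Qᵀ * z * Q := by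
      rw [Matrix.transpose_mul, Matrix.transpose_mul, Matrix.transpose_transpose, hz,
        Matrix.mul_assoc]
    have := H (Qᵀ * z * Q) hy
    have hsum : c + Qᵀ * z * Q = Qᵀ * (D + z) * Q := by
      rw [Matrix.mul_add, Matrix.add_mul, hcQ]
    rw [hsum] at this
    have hdetQ : Q.det ≠ 0 := by
      rw [hQdef, Matrix.det_nonsing_inv, Ring.inverse_eq_inv]
      exact inv_ne_zero hdetP
    have hdetQt : Qᵀ.det ≠ 0 := by rwa [Matrix.det_transpose]
    rw [Matrix.det_mul, Matrix.det_mul, Matrix.det_mul, Matrix.det_mul] at this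
    exact mul_left_cancel₀ hdetQt (mul_right_cancel₀ hdetQ this)
  have hDkk : ∀ k, D k k = 0 := by
    intro k
    set wk : Fin n → F := fun i => if i = k then 0 else 1 - D i i with hwk
    have := H' (Matrix.diagonal wk) (Matrix.diagonal_transpose wk)
    rw [Matrix.det_diagonal] at this
    rw [hDdiag, Matrix.diagonal_add, Matrix.det_diagonal] at this
    have hz : ∏ i, wk i = 0 :=
      Finset.prod_eq_zero (Finset.mem_univ k) (by simp [hwk])
    rw [hz] at this
    have hp : ∏ i, (D i i + wk i) = D k k := by
      rw [Finset.prod_eq_single k]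
      · simp [hwk]
      · intro i _ hik; simp [hwk, hik]
      · simp
    rw [hp] at this
    exact this
  have hD0 : D = 0 := by
    rw [hDdiag]
    ext i j
    by_cases hij : i = j
    · subst hij; simp [hDkk]
    · simp [Matrix.diagonal_apply_ne _ hij]
  rw [← hcQ, hD0]
  simp

/-- **Lemma 1.** If symmetric matrices `a, b` satisfy `det (a + x) = det (b + x)` for all
symmetric `x`, then `a = b`. -/
theorem symm_det_add_cancel
    {F : Type*} [Field F] {n : ℕ} (hn : 1 ≤ n)
    (hchar : ringChar F ≠ 2) (hcard : (n ^ 2 + 1 : Cardinal) ≤ Cardinal.mk F)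
    (a b : symmSubmodule F n)
    (h : ∀ x : symmSubmodule F n,
      ((a : Matrix (Fin n) (Fin n) F) + (x : Matrix (Fin n) (Fin n) F)).det
        = ((b : Matrix (Fin n) (Fin n) F) + (x : Matrix (Fin n) (Fin n) F)).det) :
    a = b := by
  haveI h2 : Invertible (2 : F) := invertibleOfNonzero (Ring.two_ne_zero hchar)
  set A : Matrix (Fin n) (Fin n) F := (a : Matrix (Fin n) (Fin n) F) with hA
  set Bm : Matrix (Fin n) (Fin n) F := (b : Matrix (Fin n) (Fin n) F) with hBm
  have ha : Aᵀ = A := a.2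
  have hb : Bmᵀ = Bm := b.2
  have key : A - Bm = 0 := by
    apply symm_det_key h2
    · rw [Matrix.transpose_sub, ha, hb]
    · intro y hy
      have hmem : (y - Bm) ∈ symmSubmodule F n := by
        show (y - Bm)ᵀ = y - Bm
        rw [Matrix.transpose_sub, hy, hb]
      have := h ⟨y - Bm, hmem⟩
      simp only [Submodule.coe_mk] at this
      have h1 : A + (y - Bm) = A - Bm + y := by abel
      have h2' : Bm + (y - Bm) = y := by abel
      rwa [h1, h2'] at this
  exact Subtype.ext (sub_eq_zero.mp key)
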